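/- Let n ≥ 3 and let w_n = (s_2, s_1, s_3, s_2, s_4, s_3, …, s_{n−1}, s_{n−2}) be the word in the generators of S_n formed by concatenating the pairs (s_{i+1}, s_i) for i = 1, 2, …, n−2. Then 𝓡_{e, w_n}(t) = t^{n−2}·F_{n−2}(t), where F_m is the m-th Fibonacci polynomial. (Equivalently, the Kazhdan–Lusztig R̃-polynomial R̃_{e,v_n}(t) = t^{n−2}F_{n−2}(t), where v_n = 34⋯n12.) -/

import Mathlib

open Polynomial

variable {B W : Type*} [Group W] {M : CoxeterMatrix B}

open scoped Classical in
/-- The diagrammatic R̃-polynomial, defined by recursion on the word read from its last letter.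
`dRAux cs ws u` where `ws` is the reversed word. -/
noncomputable def dRAux (cs : CoxeterSystem M W) : List B → W → Polynomial ℕ
  | [], u => if u = 1 then 1 else 0
  | s :: rest, u =>
      if cs.length (u * cs.simple s) < cs.length u then
        dRAux cs rest (u * cs.simple s)
      else
        dRAux cs rest (u * cs.simple s) + Polynomial.X * dRAux cs rest u

/-- The diagrammatic R̃-polynomial `𝓡_{u,w}(t) ∈ ℕ[t]`. -/
noncomputable def dR (cs : CoxeterSystem M W) (u : W) (w : List B) : Polynomial ℕ :=
  dRAux cs w.reverse u

/-- `w` is a reduced word for `v`. -/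
def IsReducedWordFor (cs : CoxeterSystem M W) (w : List B) (v : W) : Prop :=
  cs.wordProd w = v ∧ w.length = cs.length v

/-- Bruhat order via the subword property. -/
def BruhatLE (cs : CoxeterSystem M W) (u v : W) : Prop :=
  ∃ w w' : List B, IsReducedWordFor cs w v ∧ List.Sublist w' w ∧ IsReducedWordFor cs w' u
/-- The simple transposition `s_i = (i, i+1)` of `Fin n` (0-based indexing), for
`i : Fin (n - 1)`. -/
def simpleTransposition (n : ℕ) (i : Fin (n - 1)) : Equiv.Perm (Fin n) :=
  Equiv.swap ⟨i.1, by omega⟩ ⟨i.1 + 1, by omega⟩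

/-- The Fibonacci polynomials: `F 0 = 1`, `F 1 = X`, `F (n+2) = X * F (n+1) + F n`. -/
noncomputable def fibPoly : ℕ → Polynomial ℕ
  | 0 => 1
  | 1 => Polynomial.X
  | n + 2 => Polynomial.X * fibPoly (n + 1) + fibPoly n

/-- A UD-word ("up and down" word): a word of the form
`(i₁, …, i_r, t, j₁, …, j_q)` with `i₁ < ⋯ < i_r < t` and `j_q < ⋯ < j₁ < t`,
where either or both of the two blocks may be empty. -/
def IsUDWord {B : Type*} [LT B] (w : List B) : Prop :=
  ∃ (as : List B) (t : B) (bs : List B),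
    w = as ++ t :: bs ∧ as.Pairwise (· < ·) ∧ bs.Pairwise (· > ·) ∧
      (∀ x ∈ as, x < t) ∧ (∀ x ∈ bs, x < t)

/-- A permutation `v` is 321-avoiding if no reduced word of `v` contains three consecutive
letters of the form `s_i, s_{i+1}, s_i` or `s_{i+1}, s_i, s_{i+1}`. -/
def Is321Avoiding {n : ℕ} {M : CoxeterMatrix (Fin (n - 1))}
    (cs : CoxeterSystem M (Equiv.Perm (Fin n))) (v : Equiv.Perm (Fin n)) : Prop :=
  ¬ ∃ (w l r : List (Fin (n - 1))) (i j : Fin (n - 1)),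
      IsReducedWordFor cs w v ∧ w = l ++ i :: j :: i :: r ∧
        ((j : ℕ) = (i : ℕ) + 1 ∨ (i : ℕ) = (j : ℕ) + 1)

namespace PagliacciAux

/-- The reversed word, as a list of naturals. -/
def Lnat : ℕ → List ℕ
  | 0 => []
  | k + 1 => k :: (k + 1) :: Lnat k

lemma mem_Lnat_le : ∀ {k x : ℕ}, x ∈ Lnat k → x ≤ k
  | 0, x, h => by simp [Lnat] at h
  | k + 1, x, h => by
      simp only [Lnat, List.mem_cons] at h
      rcases h with rfl | rfl | h
      · omega
      · omega
      · exact le_trans (mem_Lnat_le h) (by omega)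

/-- Cast a list of naturals into `Fin (n-1)`. -/
def castList (n : ℕ) (hn : 0 < n - 1) (l : List ℕ) : List (Fin (n - 1)) :=
  l.map fun j => ⟨j % (n - 1), Nat.mod_lt _ hn⟩

open scoped Classical in
lemma dRAux_nil (cs : CoxeterSystem M W) (u : W) :
    dRAux cs [] u = if u = 1 then 1 else 0 := by rw [dRAux]

lemma dRAux_cons_of_lt (cs : CoxeterSystem M W) {s : B} (rest : List B) {u : W}
    (h : cs.length (u * cs.simple s) < cs.length u) :
    dRAux cs (s :: rest) u = dRAux cs rest (u * cs.simple s) := by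
  rw [dRAux, if_pos h]

lemma dRAux_cons_of_not_lt (cs : CoxeterSystem M W) {s : B} (rest : List B) {u : W}
    (h : ¬ cs.length (u * cs.simple s) < cs.length u) :
    dRAux cs (s :: rest) u =
      dRAux cs rest (u * cs.simple s) + Polynomial.X * dRAux cs rest u := by
  rw [dRAux, if_neg h]

variable {n : ℕ} {M : CoxeterMatrix (Fin (n - 1))}

/-- Vanishing lemma: if all letters of `ws` are small and `u` moves a large point,
then `dRAux cs ws u = 0`. -/
lemma dRAux_eq_zero (cs : CoxeterSystem M (Equiv.Perm (Fin n)))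
    (hs : ∀ i, cs.simple i = simpleTransposition n i)
    {m : ℕ} (hm : m < n) :
    ∀ (ws : List (Fin (n - 1))), (∀ s ∈ ws, (s : ℕ) + 1 < m) →
      ∀ u : Equiv.Perm (Fin n), u ⟨m, hm⟩ ≠ ⟨m, hm⟩ → dRAux cs ws u = 0
  | [], _, u, hu => by
      rw [dRAux, if_neg]
      intro h1
      exact hu (by rw [h1]; rfl)
  | s :: rest, h, u, hu => by
      have hsle : (s : ℕ) + 1 < m := h s List.mem_cons_self
      have hfix : (u * cs.simple s) ⟨m, hm⟩ ≠ ⟨m, hm⟩ := by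
        rw [hs, simpleTransposition, Equiv.Perm.mul_apply,
          Equiv.swap_apply_of_ne_of_ne (by simp [Fin.ext_iff]; omega)
            (by simp [Fin.ext_iff]; omega)]
        exact hu
      have h1 := dRAux_eq_zero cs hs hm rest
        (fun t ht => h t (List.mem_cons_of_mem _ ht)) _ hfix
      have h2 := dRAux_eq_zero cs hs hm rest
        (fun t ht => h t (List.mem_cons_of_mem _ ht)) u hu
      rw [dRAux]
      split_ifs <;> simp [h1, h2]

variable {n : ℕ} {M : CoxeterMatrix (Fin (n - 1))}

/-- The key two-letter step computation. -/
lemma dRAux_step (cs : CoxeterSystem M (Equiv.Perm (Fin n)))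
    (hs : ∀ i, cs.simple i = simpleTransposition n i)
    (a b : Fin (n - 1)) (hk2 : (a : ℕ) + 2 < n) (hbv : (b : ℕ) = (a : ℕ) + 1)
    (rest : List (Fin (n - 1))) (hrest : ∀ t ∈ rest, (t : ℕ) + 1 < (a : ℕ) + 2)
    (A P : Polynomial ℕ)
    (ihA : dRAux cs rest 1 = A)
    (hB : dRAux cs rest (cs.simple a) = P) :
    dRAux cs (a :: b :: rest) 1 = X * P + X * (X * A) ∧
      dRAux cs (a :: b :: rest) (cs.simple b) = X * A := by
  have c0 : (a : ℕ) < n := by omega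
  have c1 : (a : ℕ) + 1 < n := by omega
  have c2 : (a : ℕ) + 2 < n := hk2
  have d1 : (a : ℕ) + 1 < n - 1 := by omega
  have hb' : b = ⟨(a : ℕ) + 1, d1⟩ := Fin.ext hbv
  obtain ⟨pk, hpk⟩ : ∃ x : Fin n, x = ⟨(a : ℕ), c0⟩ := ⟨_, rfl⟩
  obtain ⟨pk1, hpk1⟩ : ∃ x : Fin n, x = ⟨(a : ℕ) + 1, c1⟩ := ⟨_, rfl⟩
  obtain ⟨pk2, hpk2⟩ : ∃ x : Fin n, x = ⟨(a : ℕ) + 2, c2⟩ := ⟨_, rfl⟩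
  have ne01 : pk ≠ pk1 := by
    rw [hpk, hpk1]; exact Fin.ne_of_val_ne (show (a : ℕ) ≠ (a : ℕ) + 1 by omega)
  have ne02 : pk ≠ pk2 := by
    rw [hpk, hpk2]; exact Fin.ne_of_val_ne (show (a : ℕ) ≠ (a : ℕ) + 2 by omega)
  have ne12 : pk1 ≠ pk2 := by
    rw [hpk1, hpk2]; exact Fin.ne_of_val_ne (show (a : ℕ) + 1 ≠ (a : ℕ) + 2 by omega)
  have hsa : cs.simple a = Equiv.swap pk pk1 := by
    rw [hs, hpk, hpk1]; rfl
  have hsb : cs.simple b = Equiv.swap pk1 pk2 := by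
    rw [hb', hs, hpk1, hpk2]; rfl
  have e1 : Equiv.swap pk pk1 pk = pk1 := Equiv.swap_apply_left _ _
  have e2 : Equiv.swap pk pk1 pk1 = pk := Equiv.swap_apply_right _ _
  have e3 : Equiv.swap pk pk1 pk2 = pk2 :=
    Equiv.swap_apply_of_ne_of_ne ne02.symm ne12.symm
  have f1 : Equiv.swap pk1 pk2 pk = pk :=
    Equiv.swap_apply_of_ne_of_ne ne01 ne02
  have f2 : Equiv.swap pk1 pk2 pk1 = pk2 := Equiv.swap_apply_left _ _
  have f3 : Equiv.swap pk1 pk2 pk2 = pk1 := Equiv.swap_apply_right _ _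
  -- nontriviality facts
  have hab1 : cs.simple a * cs.simple b ≠ 1 := by
    intro h
    have h' : (cs.simple a * cs.simple b) pk2 = pk2 := by rw [h]; rfl
    rw [Equiv.Perm.mul_apply, hsb, f3, hsa, e2] at h'
    exact ne02 h'
  have hba1 : cs.simple b * cs.simple a ≠ 1 := by
    intro h
    have h' : (cs.simple b * cs.simple a) pk2 = pk2 := by rw [h]; rfl
    rw [Equiv.Perm.mul_apply, hsa, e3, hsb, f3] at h'
    exact ne12 h'
  have hnsimp : ∀ i, cs.simple b * cs.simple a * cs.simple b ≠ cs.simple i := by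
    intro i h
    have h' : (cs.simple b * cs.simple a * cs.simple b) pk = cs.simple i pk := by
      rw [h]
    rw [Equiv.Perm.mul_apply, Equiv.Perm.mul_apply, hsb, hsa, f1, e1, f2] at h'
    rw [hs, simpleTransposition, Equiv.swap_apply_def, hpk, hpk2] at h'
    split_ifs at h' with h1 h2
    · simp only [Fin.ext_iff, Fin.val_mk] at h' h1; omega
    · simp only [Fin.ext_iff, Fin.val_mk] at h' h1 h2; omega
    · simp only [Fin.ext_iff, Fin.val_mk] at h'; omega
  -- length facts
  have hlen2 : cs.length (cs.simple b * cs.simple a) = 2 := by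
    rcases cs.length_mul_simple (cs.simple b) a with h | h
    · rw [cs.length_simple] at h; omega
    · exfalso
      rw [cs.length_simple] at h
      exact hba1 (cs.length_eq_zero_iff.mp (by omega))
  -- vanishing
  have hV : ∀ u : Equiv.Perm (Fin n), u pk2 ≠ pk2 → dRAux cs rest u = 0 := by
    intro u hu
    rw [hpk2] at hu
    exact dRAux_eq_zero cs hs (by omega) rest hrest u hu
  have z1 : dRAux cs rest (cs.simple b) = 0 :=
    hV _ (by rw [hsb, f3]; exact ne12)
  have z2 : dRAux cs rest (cs.simple a * cs.simple b) = 0 :=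
    hV _ (by rw [Equiv.Perm.mul_apply, hsb, f3, hsa, e2]; exact ne02)
  have z3 : dRAux cs rest (cs.simple b * cs.simple a) = 0 :=
    hV _ (by rw [Equiv.Perm.mul_apply, hsa, e3, hsb, f3]
             exact ne12)
  have z4 : dRAux cs rest (cs.simple b * cs.simple a * cs.simple b) = 0 :=
    hV _ (by rw [Equiv.Perm.mul_apply, Equiv.Perm.mul_apply, hsb, hsa, f3, e2, f1]
             exact ne02)
  constructor
  · -- A part
    rw [dRAux_cons_of_not_lt cs _ (by
      rw [one_mul, cs.length_simple, cs.length_one]; omega)]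
    rw [one_mul]
    rw [dRAux_cons_of_not_lt cs _
      (show ¬ cs.length (cs.simple a * cs.simple b) < cs.length (cs.simple a) by
        rw [cs.length_simple]
        intro hlt
        exact hab1 (cs.length_eq_zero_iff.mp (by omega)))]
    rw [dRAux_cons_of_not_lt cs _
      (show ¬ cs.length ((1 : Equiv.Perm (Fin n)) * cs.simple b)
          < cs.length (1 : Equiv.Perm (Fin n)) by
        rw [one_mul, cs.length_simple, cs.length_one]; omega)]
    rw [one_mul, z2, z1, ihA, hB]
    ring
  · -- B part
    rw [dRAux_cons_of_not_lt cs _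
      (show ¬ cs.length (cs.simple b * cs.simple a) < cs.length (cs.simple b) by
        rw [cs.length_simple, hlen2]; omega)]
    rw [dRAux_cons_of_lt cs _
      (show cs.length (cs.simple b * cs.simple b) < cs.length (cs.simple b) by
        rw [cs.simple_mul_simple_self, cs.length_one, cs.length_simple]; omega)]
    rw [cs.simple_mul_simple_self]
    rw [dRAux_cons_of_not_lt cs _
      (show ¬ cs.length (cs.simple b * cs.simple a * cs.simple b)
          < cs.length (cs.simple b * cs.simple a) by
        rw [hlen2]
        intro hlt
        rcases cs.length_mul_simple (cs.simple b * cs.simple a) b with h | h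
        · omega
        · have h1 : cs.length (cs.simple b * cs.simple a * cs.simple b) = 1 := by omega
          obtain ⟨i, hi⟩ := cs.length_eq_one_iff.mp h1
          exact hnsimp i hi)]
    rw [z4, z3, ihA]
    ring



lemma dRAux_main (hn : 3 ≤ n) (cs : CoxeterSystem M (Equiv.Perm (Fin n)))
    (hs : ∀ i, cs.simple i = simpleTransposition n i) :
    ∀ k, ∀ _ : k ≤ n - 2,
      dRAux cs (castList n (by omega) (Lnat k)) 1 = X ^ k * fibPoly k ∧
      (k ≠ 0 → dRAux cs (castList n (by omega) (Lnat k))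
          (cs.simple ⟨k, by omega⟩) = X ^ k * fibPoly (k - 1)) := by
  intro k
  induction k with
  | zero =>
      intro _
      refine ⟨?_, fun h => absurd rfl h⟩
      show dRAux cs [] 1 = _
      rw [dRAux_nil, if_pos rfl]
      simp [fibPoly]
  | succ k ih =>
      intro hkn
      obtain ⟨ihA, ihB⟩ := ih (by omega)
      have h0 : 0 < n - 1 := by omega
      have hka : k < n - 1 := by omega
      have hkb : k + 1 < n - 1 := by omega
      have hlist : castList n h0 (Lnat (k + 1))
          = (⟨k, hka⟩ : Fin (n - 1)) :: ⟨k + 1, hkb⟩ :: castList n h0 (Lnat k) := by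
        simp only [castList, Lnat, List.map_cons]
        congr 1
        · exact Fin.ext (Nat.mod_eq_of_lt hka)
        · congr 1
          exact Fin.ext (Nat.mod_eq_of_lt hkb)
      have hrest : ∀ t ∈ castList n h0 (Lnat k),
          (t : ℕ) + 1 < ((⟨k, hka⟩ : Fin (n - 1)) : ℕ) + 2 := by
        intro t ht
        rw [castList, List.mem_map] at ht
        obtain ⟨x, hx, rfl⟩ := ht
        have h1 := mem_Lnat_le hx
        have h2 := Nat.mod_le x (n - 1)
        show x % (n - 1) + 1 < k + 2
        omega
      have hk2 : ((⟨k, hka⟩ : Fin (n - 1)) : ℕ) + 2 < n := by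
        show k + 2 < n; omega
      have hbv : ((⟨k + 1, hkb⟩ : Fin (n - 1)) : ℕ) = ((⟨k, hka⟩ : Fin (n - 1)) : ℕ) + 1 := rfl
      rcases Nat.eq_zero_or_pos k with rfl | hkpos
      · -- base-ish case k = 0
        have hB0 : dRAux cs (castList n h0 (Lnat 0)) (cs.simple ⟨0, hka⟩) = 0 := by
          show dRAux cs [] _ = 0
          rw [dRAux_nil, if_neg]
          intro hh
          have h1 := cs.length_simple (⟨0, hka⟩ : Fin (n - 1))
          rw [hh, cs.length_one] at h1
          omega
        obtain ⟨SA, SB⟩ := dRAux_step cs hs ⟨0, hka⟩ ⟨1, hkb⟩ hk2 hbv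
          (castList n h0 (Lnat 0)) hrest (X ^ 0 * fibPoly 0) 0 ihA hB0
        constructor
        · rw [hlist, SA]
          show X * 0 + X * (X * (X ^ 0 * fibPoly 0)) = X ^ 1 * fibPoly 1
          simp [fibPoly]
        · intro _
          rw [hlist, SB]
          show X * (X ^ 0 * fibPoly 0) = X ^ 1 * fibPoly (1 - 1)
          simp [fibPoly]
      · -- inductive case k = k' + 1
        obtain ⟨k', rfl⟩ : ∃ k', k = k' + 1 := ⟨k - 1, by omega⟩
        have hB1 := ihB (by omega)
        rw [Nat.add_sub_cancel] at hB1
        obtain ⟨SA, SB⟩ := dRAux_step cs hs ⟨k' + 1, hka⟩ ⟨k' + 2, hkb⟩ hk2 hbv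
          (castList n h0 (Lnat (k' + 1))) hrest
          (X ^ (k' + 1) * fibPoly (k' + 1)) (X ^ (k' + 1) * fibPoly k') ihA hB1
        constructor
        · rw [hlist, SA]
          rw [show fibPoly (k' + 1 + 1) = X * fibPoly (k' + 1) + fibPoly k' from rfl]
          ring
        · intro _
          rw [hlist, SB, Nat.add_sub_cancel]
          ring

lemma rev_eq (hn : 3 ≤ n) (f : (j : ℕ) → j < n - 2 → List (Fin (n - 1)))
    (hf : ∀ j hj, f j hj = [⟨j + 1, (by omega : j + 1 + 1 ≤ n - 1)⟩, ⟨j, (by omega : j + 1 ≤ n - 1)⟩])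
    (H : ∀ j ∈ List.range (n - 2), j < n - 2) :
    (((List.range (n - 2)).pmap f H).flatten).reverse
      = castList n (by omega) (Lnat (n - 2)) := by
  have h0 : 0 < n - 1 := by omega
  obtain ⟨g, hg⟩ : ∃ g : ℕ → List (Fin (n - 1)), g = fun j =>
      [⟨(j + 1) % (n - 1), Nat.mod_lt _ h0⟩, ⟨j % (n - 1), Nat.mod_lt _ h0⟩] := ⟨_, rfl⟩
  have hfg : List.pmap f (List.range (n - 2)) H = (List.range (n - 2)).map g := by
    refine (List.pmap_congr_left (q := fun j => j ∈ List.range (n - 2))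
      (g := fun j _ => g j) (H₂ := fun a ha => ha) (List.range (n - 2))
      (fun j hj h₁ _ => ?_)).trans (List.pmap_eq_map (fun a ha => ha))
    rw [hf j h₁, hg]
    have hj' : j < n - 2 := h₁
    congr 2
    · exact (Nat.mod_eq_of_lt (show j + 1 < n - 1 by omega)).symm
    · congr 1
      exact (Nat.mod_eq_of_lt (show j < n - 1 by omega)).symm
  rw [hfg]
  have key : ∀ m, ((List.map g (List.range m)).flatten).reverse = castList n h0 (Lnat m) := by
    intro m
    induction m with
    | zero => simp [castList, Lnat]
    | succ m ih =>
        rw [List.range_succ, List.map_append, List.flatten_append, List.reverse_append, ih]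
        show ((g m ++ []).reverse) ++ _ = _
        rw [List.append_nil, hg]
        simp [castList, Lnat]
  exact key (n - 2)

end PagliacciAux

/-- Pagliacci's formula: for the reduced word
`w_n = s_2 s_1 s_3 s_2 ⋯ s_{n-1} s_{n-2}` (1-based; here 0-based pairs `(j+1, j)` for
`j = 0, …, n-3`) of the permutation `v_n = 34⋯n12`, we have
`𝓡_{e,w_n}(t) = t^{n-2} F_{n-2}(t)`. -/
theorem dR_one_pagliacci {n : ℕ} (hn : 3 ≤ n) {M : CoxeterMatrix (Fin (n - 1))}
    (cs : CoxeterSystem M (Equiv.Perm (Fin n)))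
    (hs : ∀ i : Fin (n - 1), cs.simple i = simpleTransposition n i)
    (w : List (Fin (n - 1)))
    (hw : w = ((List.range (n - 2)).pmap
        (fun j hj => [(⟨j + 1, by omega⟩ : Fin (n - 1)), (⟨j, by omega⟩ : Fin (n - 1))])
        (fun j hj => List.mem_range.mp hj)).flatten) :
    dR cs 1 w = Polynomial.X ^ (n - 2) * fibPoly (n - 2) := by
  rw [dR, hw]
  rw [PagliacciAux.rev_eq hn _ (fun j hj => rfl) (fun j hj => List.mem_range.mp hj)]
  exact (PagliacciAux.dRAux_main hn cs hs (n - 2) le_rfl).1
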